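/- Let I be a homogeneous ideal in S = k[x_1,...,x_d] whose degree-2 part has a basis of the form {x_1x_{i} + ζ_i : 3 ≤ i ≤ d−1} where each ζ_i ∈ k[x_2,...,x_d]_2. Then any linear syzygy Σ λ_i (x_1x_i + ζ_i) = 0 with λ_i ∈ S_1 must have each λ_i in the span of x_3,...,x_{d-1} arising from Koszul relations; in particular, if for every cyclic shift of the variable order the degree-2 part admits an analogous basis {x_rx_s + ζ'_s} with ζ'_s free of x_r, then the degree-2 part of I admits no nonzero linear first syzygy. -/

import Mathlib

open MvPolynomial Fin.NatCast

/-- A finsupp of degree 1 is a single. -/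
lemma aux_degree_one_single {σ : Type*} {s : σ →₀ ℕ} (h : s.degree = 1) :
    ∃ i, s = Finsupp.single i 1 := by
  classical
  have hne : s ≠ 0 := by
    intro h0; rw [h0, map_zero] at h; exact one_ne_zero h.symm
  obtain ⟨i, hi⟩ := Finsupp.ne_iff.mp hne
  simp only [Finsupp.coe_zero, Pi.zero_apply] at hi
  refine ⟨i, ?_⟩
  have hile : s i ≤ 1 := h ▸ Finsupp.le_degree i s
  ext j
  rcases eq_or_ne j i with rfl | hji
  · rw [Finsupp.single_apply, if_pos rfl]; omega
  · rw [Finsupp.single_apply, if_neg (Ne.symm hji)]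
    by_contra hj0
    have hi' : i ∈ s.support := Finsupp.mem_support_iff.2 hi
    have hj' : j ∈ s.support := Finsupp.mem_support_iff.2 hj0
    have h2 : s i + s j ≤ s.degree := by
      have hsub : ({i, j} : Finset σ) ⊆ s.support := by
        intro t ht
        rcases Finset.mem_insert.mp ht with rfl | ht
        · exact hi'
        · rwa [Finset.mem_singleton.mp ht]
      calc s i + s j = ∑ t ∈ ({i, j} : Finset σ), s t :=
            (Finset.sum_pair (Ne.symm hji)).symm
        _ ≤ ∑ t ∈ s.support, s t := Finset.sum_le_sum_of_subset hsub
        _ = s.degree := rfl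
    omega

/-- Coefficient vanishing from absent variable. -/
lemma aux_coeff_zero_of_notMem_vars {σ R : Type*} [CommSemiring R] {p : MvPolynomial σ R}
    {r : σ} (h : r ∉ p.vars) {s : σ →₀ ℕ} (hs : s r ≠ 0) : coeff s p = 0 := by
  by_contra hc
  exact h ((mem_vars r).2 ⟨s, MvPolynomial.mem_support_iff.2 hc, Finsupp.mem_support_iff.2 hs⟩)

/-- Linear independence of the forms `X r * X (j m) + ζ m`. -/
lemma aux_indep {k : Type*} [Field k] {σ : Type*} [DecidableEq σ] {N : ℕ} (r : σ)
    (j : Fin N → σ) (hj : ∀ m n, j m = j n → m = n) (hjr : ∀ m, j m ≠ r)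
    (ζ : Fin N → MvPolynomial σ k) (hζ : ∀ m, r ∉ (ζ m).vars)
    (c : Fin N → k) (h : ∑ m, c m • (X r * X (j m) + ζ m) = 0) : ∀ n, c n = 0 := by
  intro n
  set s : σ →₀ ℕ := Finsupp.single r 1 + Finsupp.single (j n) 1 with hs
  have h0 : coeff s (∑ m, c m • (X r * X (j m) + ζ m)) = 0 := by rw [h, coeff_zero]
  rw [coeff_sum] at h0
  have key : ∀ m : Fin N, coeff s (c m • (X r * X (j m) + ζ m)) = if m = n then c n else 0 := by
    intro m
    rw [coeff_smul, coeff_add]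
    have hζ0 : coeff s (ζ m) = 0 := by
      refine aux_coeff_zero_of_notMem_vars (hζ m) ?_
      simp [hs, Finsupp.single_apply, hjr n, Ne.symm (hjr n)]
    have hX : coeff s (X (σ := σ) r * X (j m)) = if m = n then (1 : k) else 0 := by
      rcases eq_or_ne m n with rfl | hmn
      · rw [if_pos rfl, coeff_mul_X',
          if_pos (by simp [hs, Finsupp.mem_support_iff, Finsupp.single_apply,
            hjr m, Ne.symm (hjr m)] : j m ∈ s.support)]
        have : s - Finsupp.single (j m) 1 = Finsupp.single r 1 := by
          rw [hs]; ext a; simp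
        rw [this, coeff_X, if_pos rfl]
      · rw [if_neg hmn, coeff_mul_X', if_neg]
        simp only [hs, Finsupp.mem_support_iff, Finsupp.add_apply, Finsupp.single_apply,
          ne_eq, not_not]
        rw [if_neg (Ne.symm (hjr m)), if_neg (fun hh => hmn (hj m n hh.symm))]
        rfl
    rw [hX, hζ0, add_zero]
    rcases eq_or_ne m n with rfl | hmn
    · simp
    · simp [hmn]
  rw [Finset.sum_congr rfl (fun m _ => key m)] at h0
  simpa using h0

/-- The key syzygy step: coefficient of `x_r` in each `μ n` vanishes. -/
lemma aux_syz {k : Type*} [Field k] {σ : Type*} [DecidableEq σ] {N : ℕ} (r : σ)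
    (j : Fin N → σ) (hj : ∀ m n, j m = j n → m = n) (hjr : ∀ m, j m ≠ r)
    (ζ : Fin N → MvPolynomial σ k) (hζ : ∀ m, r ∉ (ζ m).vars)
    (μ : Fin N → MvPolynomial σ k) (hμ : ∀ m s, coeff s (μ m) ≠ 0 → Finsupp.degree s = 1)
    (h : ∑ m, μ m * (X r * X (j m) + ζ m) = 0) :
    ∀ n, coeff (Finsupp.single r 1) (μ n) = 0 := by
  intro n
  set s : σ →₀ ℕ := Finsupp.single r 2 + Finsupp.single (j n) 1 with hs
  have hsr : s r = 2 := by simp [hs, Finsupp.single_apply, hjr n, Ne.symm (hjr n)]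
  have h0 : coeff s (∑ m, μ m * (X r * X (j m) + ζ m)) = 0 := by rw [h, coeff_zero]
  rw [coeff_sum] at h0
  have key : ∀ m : Fin N, coeff s (μ m * (X r * X (j m) + ζ m)) =
      if m = n then coeff (Finsupp.single r 1) (μ n) else 0 := by
    intro m
    rw [mul_add, coeff_add]
    have hζ0 : coeff s (μ m * ζ m) = 0 := by
      rw [coeff_mul]
      apply Finset.sum_eq_zero
      rintro ⟨a, b⟩ hab
      rw [Finset.HasAntidiagonal.mem_antidiagonal] at hab
      by_cases hb : coeff b (ζ m) = 0
      · simp [hb]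
      have hbr : b r = 0 := by
        by_contra hbr
        exact hb (aux_coeff_zero_of_notMem_vars (hζ m) hbr)
      have har : a r = 2 := by
        have : a r + b r = s r := by rw [← Finsupp.add_apply, hab]
        omega
      have ha : coeff a (μ m) = 0 := by
        by_contra hc
        have hd := hμ m a hc
        have := Finsupp.le_degree r a
        omega
      simp [ha]
    have hX : coeff s (μ m * (X (σ := σ) r * X (j m))) =
        if m = n then coeff (Finsupp.single r 1) (μ n) else 0 := by
      rw [← mul_assoc, coeff_mul_X']
      rcases eq_or_ne m n with rfl | hmn
      · rw [if_pos (by simp [hs, Finsupp.mem_support_iff, Finsupp.single_apply,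
            hjr m, Ne.symm (hjr m)] : j m ∈ s.support)]
        have h1 : s - Finsupp.single (j m) 1 = Finsupp.single r 2 := by
          rw [hs]; ext a; simp
        rw [h1, if_pos rfl, coeff_mul_X',
          if_pos (by simp [Finsupp.mem_support_iff, Finsupp.single_apply] :
            r ∈ (Finsupp.single r 2).support)]
        congr 1
        ext a
        rw [Finsupp.tsub_apply]
        simp only [Finsupp.single_apply]
        split_ifs <;> rfl
      · rw [if_neg, if_neg hmn]
        simp only [hs, Finsupp.mem_support_iff, Finsupp.add_apply, Finsupp.single_apply,
          ne_eq, not_not]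
        rw [if_neg (Ne.symm (hjr m)), if_neg (fun hh => hmn (hj m n hh.symm))]
        rfl
    rw [hX, hζ0, add_zero]
  rw [Finset.sum_congr rfl (fun m _ => key m)] at h0
  simpa using h0

lemma aux_mod {d x : ℕ} (h : x < 2 * d) : x % d = if x < d then x else x - d := by
  split_ifs with h1
  · exact Nat.mod_eq_of_lt h1
  · rw [Nat.mod_eq_sub_mod (le_of_not_gt h1), Nat.mod_eq_of_lt (by omega)]

theorem stmt19 (d : ℕ) (hd : 6 ≤ d) [NeZero d] (k : Type*) [Field k]
    (Q : Fin (d - 3) → MvPolynomial (Fin d) k)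
    (hQhom : ∀ m, (Q m).IsHomogeneous 2)
    (hbasis : ∀ r : Fin d, ∃ T ζ : Fin (d - 3) → MvPolynomial (Fin d) k,
      Submodule.span k (Set.range T) = Submodule.span k (Set.range Q) ∧
      (∀ m : Fin (d - 3), T m = X r * X (r + 2 + ((m : ℕ) : Fin d)) + ζ m) ∧
      (∀ m, (ζ m).IsHomogeneous 2) ∧ (∀ m, r ∉ (ζ m).vars)) :
    ∀ lam : Fin (d - 3) → MvPolynomial (Fin d) k,
      (∀ m, (lam m).IsHomogeneous 1) → ∑ m, lam m * Q m = 0 → lam = 0 := by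
  classical
  intro lam hlam hsyz
  have hlamdeg : ∀ m s, coeff s (lam m) ≠ 0 → Finsupp.degree s = 1 := by
    intro m s h
    by_contra hne
    exact h ((hlam m).coeff_eq_zero hne)
  suffices hcoeff : ∀ (r : Fin d) (m : Fin (d - 3)),
      coeff (Finsupp.single r 1) (lam m) = 0 by
    funext m
    rw [Pi.zero_apply]
    ext s
    rw [coeff_zero]
    by_contra h
    obtain ⟨i, rfl⟩ := aux_degree_one_single (hlamdeg m s h)
    exact h (hcoeff i m)
  intro r
  obtain ⟨T, ζ, hspan, hT, hζhom, hζvars⟩ := hbasis r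
  set j : Fin (d - 3) → Fin d := fun m => r + 2 + ((m : ℕ) : Fin d) with hjdef
  have hval : ∀ m : Fin (d - 3), (j m).val = (r.val + 2 + (m : ℕ)) % d := by
    intro m
    have h2 : ((2 : Fin d)).val = 2 := by
      have : (2 : Fin d) = ((2 : ℕ) : Fin d) := by norm_cast
      rw [this, Fin.val_natCast]
      exact Nat.mod_eq_of_lt (by omega)
    have hm : (((m : ℕ) : Fin d)).val = (m : ℕ) := by
      rw [Fin.val_natCast]
      exact Nat.mod_eq_of_lt (by omega)
    show ((r + 2 + ((m : ℕ) : Fin d)) : Fin d).val = _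
    rw [Fin.val_add, Fin.val_add, h2, hm, Nat.mod_add_mod]
  have hmlt : ∀ m : Fin (d - 3), (m : ℕ) < d - 3 := fun m => m.2
  have hjr : ∀ m, j m ≠ r := by
    intro m hm
    have h1 : (r.val + 2 + (m : ℕ)) % d = r.val := by rw [← hval m, hm]
    have hx : r.val + 2 + (m : ℕ) < 2 * d := by have := r.2; have := hmlt m; omega
    rw [aux_mod hx] at h1
    have := r.2; have := hmlt m
    split_ifs at h1 <;> omega
  have hjinj : ∀ m n, j m = j n → m = n := by
    intro m n hmn
    have h1 : (r.val + 2 + (m : ℕ)) % d = (r.val + 2 + (n : ℕ)) % d := by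
      rw [← hval m, ← hval n, hmn]
    have hxm : r.val + 2 + (m : ℕ) < 2 * d := by have := r.2; have := hmlt m; omega
    have hxn : r.val + 2 + (n : ℕ) < 2 * d := by have := r.2; have := hmlt n; omega
    rw [aux_mod hxm, aux_mod hxn] at h1
    have := r.2; have := hmlt m; have := hmlt n
    have : (m : ℕ) = (n : ℕ) := by split_ifs at h1 <;> omega
    exact Fin.ext this
  have hT' : ∀ m, T m = X r * X (j m) + ζ m := hT
  -- coefficients expressing Q in terms of T and vice versa
  have hQmem : ∀ m, Q m ∈ Submodule.span k (Set.range T) := by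
    intro m
    rw [hspan]
    exact Submodule.subset_span ⟨m, rfl⟩
  have hTmem : ∀ n, T n ∈ Submodule.span k (Set.range Q) := by
    intro n
    rw [← hspan]
    exact Submodule.subset_span ⟨n, rfl⟩
  choose A hA using fun m => (Submodule.mem_span_range_iff_exists_fun k).1 (hQmem m)
  choose B hB using fun n => (Submodule.mem_span_range_iff_exists_fun k).1 (hTmem n)
  -- linear independence of T
  have hTindep : ∀ c : Fin (d - 3) → k, (∑ n, c n • T n) = 0 → ∀ n, c n = 0 := by
    intro c hc
    apply aux_indep r j hjinj hjr ζ hζvars c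
    rw [show (∑ m, c m • (X r * X (j m) + ζ m)) = ∑ n, c n • T n from
      Finset.sum_congr rfl fun n _ => by rw [hT' n]]
    exact hc
  -- B * A = 1
  have hBA : ∀ n p, (∑ m, B n m * A m p) = if n = p then (1 : k) else 0 := by
    intro n p
    have h1 : ∑ q, (∑ m, B n m * A m q) • T q = T n := by
      calc ∑ q, (∑ m, B n m * A m q) • T q
          = ∑ q, ∑ m, B n m • (A m q • T q) := by
            refine Finset.sum_congr rfl fun q _ => ?_
            rw [Finset.sum_smul]
            exact Finset.sum_congr rfl fun m _ => by rw [smul_smul]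
        _ = ∑ m, ∑ q, B n m • (A m q • T q) := Finset.sum_comm
        _ = ∑ m, B n m • Q m := by
            refine Finset.sum_congr rfl fun m _ => ?_
            rw [← Finset.smul_sum, hA m]
        _ = T n := hB n
    have h2 : ∑ q, ((∑ m, B n m * A m q) - if n = q then (1 : k) else 0) • T q = 0 := by
      have h3 : ∑ q, (if n = q then (1 : k) else 0) • T q = T n := by
        rw [Finset.sum_congr rfl fun q (_ : q ∈ Finset.univ) => ite_smul _ _ _ _]
        simp
      calc ∑ q, ((∑ m, B n m * A m q) - if n = q then (1 : k) else 0) • T q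
          = (∑ q, (∑ m, B n m * A m q) • T q) -
              ∑ q, (if n = q then (1 : k) else 0) • T q := by
            rw [← Finset.sum_sub_distrib]
            exact Finset.sum_congr rfl fun q _ => by rw [sub_smul]
        _ = 0 := by rw [h1, h3, sub_self]
    have := hTindep _ h2 p
    exact eq_of_sub_eq_zero this
  -- A * B = 1
  have hAB : ∀ p m, (∑ n, A p n * B n m) = if p = m then (1 : k) else 0 := by
    have hBA' : (Matrix.of B) * (Matrix.of A) = 1 := by
      ext n p
      rw [Matrix.mul_apply, Matrix.one_apply]
      exact hBA n p
    have hAB' : (Matrix.of A) * (Matrix.of B) = 1 := mul_eq_one_comm.2 hBA'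
    intro p m
    have := congrFun (congrFun hAB' p) m
    rwa [Matrix.mul_apply, Matrix.one_apply] at this
  -- define μ
  set μ : Fin (d - 3) → MvPolynomial (Fin d) k := fun n => ∑ m, A m n • lam m with hμdef
  have hμsyz : ∑ n, μ n * T n = 0 := by
    calc ∑ n, μ n * T n
        = ∑ n, ∑ m, A m n • (lam m * T n) := by
          refine Finset.sum_congr rfl fun n _ => ?_
          rw [hμdef, Finset.sum_mul]
          exact Finset.sum_congr rfl fun m _ => smul_mul_assoc _ _ _
      _ = ∑ m, ∑ n, A m n • (lam m * T n) := Finset.sum_comm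
      _ = ∑ m, lam m * Q m := by
          refine Finset.sum_congr rfl fun m _ => ?_
          rw [← hA m, Finset.mul_sum]
          exact Finset.sum_congr rfl fun n _ => (mul_smul_comm _ _ _).symm
      _ = 0 := hsyz
  have hμdeg : ∀ n s, coeff s (μ n) ≠ 0 → Finsupp.degree s = 1 := by
    intro n s h
    by_contra hdne
    apply h
    rw [hμdef]
    rw [coeff_sum]
    apply Finset.sum_eq_zero
    intro m _
    rw [coeff_smul]
    have : coeff s (lam m) = 0 := by
      by_contra hc
      exact hdne (hlamdeg m s hc)
    rw [this, smul_zero]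
  have hμ0 : ∀ n, coeff (Finsupp.single r 1) (μ n) = 0 := by
    apply aux_syz r j hjinj hjr ζ hζvars μ hμdeg
    rw [show (∑ m, μ m * (X r * X (j m) + ζ m)) = ∑ n, μ n * T n from
      Finset.sum_congr rfl fun n _ => by rw [hT' n]]
    exact hμsyz
  -- conclude
  intro m
  have hlm : lam m = ∑ n, B n m • μ n := by
    symm
    calc ∑ n, B n m • μ n
        = ∑ n, ∑ p, (A p n * B n m) • lam p := by
          refine Finset.sum_congr rfl fun n _ => ?_
          rw [hμdef, Finset.smul_sum]
          exact Finset.sum_congr rfl fun p _ => by rw [smul_smul, mul_comm]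
      _ = ∑ p, (∑ n, A p n * B n m) • lam p := by
          rw [Finset.sum_comm]
          refine Finset.sum_congr rfl fun p _ => ?_
          rw [Finset.sum_smul]
      _ = ∑ p, (if p = m then (1 : k) else 0) • lam p := by
          exact Finset.sum_congr rfl fun p _ => by rw [hAB p m]
      _ = lam m := by
          rw [Finset.sum_congr rfl fun p (_ : p ∈ Finset.univ) => ite_smul _ _ _ _]
          simp
  rw [hlm, coeff_sum]
  apply Finset.sum_eq_zero
  intro n _
  rw [coeff_smul, hμ0 n, smul_zero]
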